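/- arXiv:2502.17008 — 2 statements merged into one kernel-verified Lean document; each statement's English description precedes it below -/
import Mathlib

section
/- Let $a, b, c$ be natural numbers. Then $$\sum_{k=-\min\{a,b,c\}}^{\min\{a,b,c\}} (-1)^k \binom{a+b}{a+k}\binom{b+c}{b+k}\binom{c+a}{c+k} \;=\; \frac{(a+b+c)!}{a!\,b!\,c!},$$ where the sum is over all integers $k$ with $-\min\{a,b,c\} \le k \le \min\{a,b,c\}$ (equivalently over all integers, since the binomial coefficients vanish outside this range). -/
open Finset

/-- binomial coefficient with integer lower index, zero when negative. -/
def ich (n : ℕ) (k : ℤ) : ℚ :=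
  if 0 ≤ k then (n.choose k.toNat : ℚ) else 0

lemma ich_neg {n : ℕ} {k : ℤ} (h : k < 0) : ich n k = 0 := by
  simp [ich, not_le.2 h]

lemma ich_big {n : ℕ} {k : ℤ} (h : (n : ℤ) < k) : ich n k = 0 := by
  rcases le_or_gt 0 k with h0 | h0
  · have : n < k.toNat := by omega
    simp [ich, h0, Nat.choose_eq_zero_of_lt this]
  · exact ich_neg h0

lemma ich_pascal (n : ℕ) (k : ℤ) : ich (n + 1) (k + 1) = ich n (k + 1) + ich n k := by
  rcases lt_trichotomy k (-1) with h | h | h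
  · rw [ich_neg (by omega), ich_neg (by omega), ich_neg (by omega)]; ring
  · subst h; simp [ich, ich_neg]
  · have h0 : 0 ≤ k := by omega
    have h1 : (k + 1).toNat = k.toNat + 1 := by omega
    simp only [ich, if_pos (by omega : (0:ℤ) ≤ k + 1), if_pos h0, h1,
      Nat.choose_succ_succ]
    push_cast; ring

/-- Dixon summand. -/
def T (a b c : ℕ) (k : ℤ) : ℚ :=
  (-1) ^ k * ich (a + b) (a + k) * ich (b + c) (b + k) * ich (c + a) (c + k)

/-- Telescoping certificate. -/
def H (a b c : ℕ) (k : ℤ) : ℚ :=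
  (-1) ^ (k + 1) * ich (a + b + 1) (a + k) * ich (b + c + 1) (b + k) *
    ich (c + a + 1) (c + k)

lemma T_eq_zero {a b c : ℕ} {k : ℤ}
    (h : k < -(min (a:ℤ) (min (b:ℤ) (c:ℤ))) ∨ min (a:ℤ) (min (b:ℤ) (c:ℤ)) < k) :
    T a b c k = 0 := by
  rcases h with h | h
  · rcases le_total (a:ℤ) (min (b:ℤ) (c:ℤ)) with h1 | h1
    · rw [min_eq_left h1] at h
      have : ich (a + b) ((a:ℤ) + k) = 0 := ich_neg (by omega)
      simp [T, this]
    · rw [min_eq_right h1] at h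
      rcases le_total (b:ℤ) (c:ℤ) with h2 | h2
      · rw [min_eq_left h2] at h
        have : ich (b + c) ((b:ℤ) + k) = 0 := ich_neg (by omega)
        simp [T, this]
      · rw [min_eq_right h2] at h
        have : ich (c + a) ((c:ℤ) + k) = 0 := ich_neg (by omega)
        simp [T, this]
  · rcases le_total (a:ℤ) (min (b:ℤ) (c:ℤ)) with h1 | h1
    · rw [min_eq_left h1] at h
      have : ich (c + a) ((c:ℤ) + k) = 0 := ich_big (by push_cast; omega)
      simp [T, this]
    · rw [min_eq_right h1] at h
      rcases le_total (b:ℤ) (c:ℤ) with h2 | h2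
      · rw [min_eq_left h2] at h
        have : ich (a + b) ((a:ℤ) + k) = 0 := ich_big (by push_cast; omega)
        simp [T, this]
      · rw [min_eq_right h2] at h
        have : ich (b + c) ((b:ℤ) + k) = 0 := ich_big (by push_cast; omega)
        simp [T, this]

lemma key (a b c : ℕ) (k : ℤ) :
    T (a + 1) (b + 1) (c + 1) k - T a (b + 1) (c + 1) k - T (a + 1) b (c + 1) k
      - T (a + 1) (b + 1) c k = H a b c (k + 1) - H a b c k := by
  have hm1 : (-1 : ℚ) ^ (k + 1) = -(-1) ^ k := by
    rw [zpow_add_one₀ (by norm_num : (-1:ℚ) ≠ 0)]; ring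
  have hm2 : (-1 : ℚ) ^ (k + 1 + 1) = (-1) ^ k := by
    rw [zpow_add_one₀ (by norm_num : (-1:ℚ) ≠ 0), hm1]; ring
  simp only [T, H]
  push_cast
  simp only [show a + 1 + (b + 1) = (a + b + 1) + 1 by omega,
    show b + 1 + (c + 1) = (b + c + 1) + 1 by omega,
    show c + 1 + (a + 1) = (c + a + 1) + 1 by omega,
    show a + (b + 1) = a + b + 1 by omega,
    show b + 1 + c = b + c + 1 by omega,
    show c + 1 + a = c + a + 1 by omega,
    show a + 1 + b = a + b + 1 by omega,
    show b + (c + 1) = b + c + 1 by omega,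
    show c + (a + 1) = c + a + 1 by omega,
    show ((a:ℤ) + 1 + k) = (a + k) + 1 by ring,
    show ((b:ℤ) + 1 + k) = (b + k) + 1 by ring,
    show ((c:ℤ) + 1 + k) = (c + k) + 1 by ring,
    show ((a:ℤ) + (k + 1)) = (a + k) + 1 by ring,
    show ((b:ℤ) + (k + 1)) = (b + k) + 1 by ring,
    show ((c:ℤ) + (k + 1)) = (c + k) + 1 by ring,
    ich_pascal, hm1, hm2]
  ring

lemma telescope (f : ℤ → ℚ) (l : ℤ) (M : ℕ) :
    ∑ k ∈ Icc l (l + M), (f (k + 1) - f k) = f (l + M + 1) - f l := by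
  induction M with
  | zero => simp
  | succ M ih =>
    have hins : Icc l (l + (M + 1 : ℕ)) = insert (l + M + 1) (Icc l (l + M)) := by
      ext x; simp only [mem_Icc, mem_insert]; push_cast; omega
    rw [hins, Finset.sum_insert (by simp only [mem_Icc]; omega), ih]
    push_cast
    ring_nf

/-- sum over a large symmetric interval equals the restricted Dixon sum. -/
lemma sum_T_eq (a b c N : ℕ) (hN : min a (min b c) ≤ N) :
    ∑ k ∈ Icc (-(N:ℤ)) (N:ℤ), T a b c k
      = ∑ k ∈ Icc (-(min (a:ℤ) (min (b:ℤ) (c:ℤ)))) (min (a:ℤ) (min (b:ℤ) (c:ℤ))),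
          T a b c k := by
  have hsub : Icc (-(min (a:ℤ) (min (b:ℤ) (c:ℤ)))) (min (a:ℤ) (min (b:ℤ) (c:ℤ)))
      ⊆ Icc (-(N:ℤ)) (N:ℤ) := by
    intro x hx
    simp only [mem_Icc] at hx ⊢
    have h1 : (min (a:ℤ) (min (b:ℤ) (c:ℤ))) ≤ N := by
      have h2 : ((min a (min b c) : ℕ) : ℤ) ≤ N := by exact_mod_cast hN
      push_cast at h2
      omega
    omega
  exact (Finset.sum_subset hsub (fun x _ hx => by
    apply T_eq_zero
    simp only [mem_Icc, not_and_or, not_le] at hx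
    tauto)).symm

lemma ich_natCast (n m : ℕ) : ich n (m : ℤ) = n.choose m := by
  simp [ich]

lemma T_eval_zero (a b c : ℕ) :
    T a b c 0 = ((a + b).choose a : ℚ) * ((b + c).choose b) * ((c + a).choose c) := by
  simp only [T, add_zero, ich_natCast, zpow_zero, one_mul]

lemma dixon_aux : ∀ n a b c : ℕ, a + b + c = n →
    ∑ k ∈ Icc (-(min (a:ℤ) (min (b:ℤ) (c:ℤ)))) (min (a:ℤ) (min (b:ℤ) (c:ℤ))),
        T a b c k
      = ((a + b + c).factorial : ℚ) /
          ((a.factorial : ℚ) * (b.factorial : ℚ) * (c.factorial : ℚ)) := by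
  intro n
  induction n using Nat.strong_induction_on with
  | _ n ih =>
    intro a b c hn
    match a, b, c with
    | 0, b, c =>
        have hmin : min ((0:ℕ):ℤ) (min (b:ℤ) (c:ℤ)) = 0 := by
          rw [Nat.cast_zero]; exact min_eq_left (by positivity)
        rw [hmin]
        simp only [neg_zero, Icc_self, Finset.sum_singleton]
        have : T 0 b c 0 = ((b + c).choose b : ℚ) := by
          simp only [T]
          rw [show ((0:ℕ):ℤ) + (0:ℤ) = ((0:ℕ):ℤ) by ring,
            show ((b:ℕ):ℤ) + (0:ℤ) = ((b:ℕ):ℤ) by ring,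
            show ((c:ℕ):ℤ) + (0:ℤ) = ((c:ℕ):ℤ) by ring,
            ich_natCast, ich_natCast, ich_natCast]
          simp
        rw [this, Nat.cast_choose ℚ (by omega : b ≤ b + c),
          show b + c - b = c by omega]
        norm_num
    | a+1, 0, c =>
        have hmin : min (((a+1:ℕ)):ℤ) (min ((0:ℕ):ℤ) ((c:ℕ):ℤ)) = 0 := by
          push_cast; omega
        rw [hmin]
        simp only [neg_zero, Icc_self, Finset.sum_singleton, T_eval_zero]
        rw [show c + (a+1) = a + 1 + 0 + c by omega]
        rw [Nat.cast_choose ℚ (by omega : c ≤ a + 1 + 0 + c),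
          show a + 1 + 0 + c - c = a + 1 by omega]
        simp [Nat.choose_self]
        ring
    | a+1, b+1, 0 =>
        have hmin : min (((a+1:ℕ)):ℤ) (min (((b+1:ℕ)):ℤ) ((0:ℕ):ℤ)) = 0 := by
          push_cast; omega
        rw [hmin]
        simp only [neg_zero, Icc_self, Finset.sum_singleton, T_eval_zero]
        rw [show a + 1 + (b+1) = a + 1 + (b + 1) + 0 by omega]
        rw [Nat.cast_choose ℚ (by omega : a + 1 ≤ a + 1 + (b + 1) + 0),
          show a + 1 + (b + 1) + 0 - (a + 1) = b + 1 by omega]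
        simp [Nat.choose_self]
    | a+1, b+1, c+1 =>
        have hHtop : H a b c (((a+b+c+3 : ℕ):ℤ) + 1) = 0 := by
          have h0 : ich (a+b+1) ((a:ℤ) + (((a+b+c+3 : ℕ):ℤ) + 1)) = 0 :=
            ich_big (by push_cast; omega)
          simp only [H, mul_eq_zero]
          left; left; right
          exact ich_big (by push_cast; omega)
        have hHbot : H a b c (-((a+b+c+3 : ℕ):ℤ)) = 0 := by
          have h0 : ich (a+b+1) ((a:ℤ) + (-((a+b+c+3 : ℕ):ℤ))) = 0 :=
            ich_neg (by push_cast; omega)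
          simp only [H, mul_eq_zero]
          left; left; right
          exact ich_neg (by push_cast; omega)
        have h0 : ∑ k ∈ Icc (-((a+b+c+3 : ℕ):ℤ)) ((a+b+c+3 : ℕ):ℤ),
            (T (a+1) (b+1) (c+1) k - T a (b+1) (c+1) k - T (a+1) b (c+1) k
              - T (a+1) (b+1) c k) = 0 := by
          rw [Finset.sum_congr rfl (fun k _ => key a b c k)]
          rw [show Icc (-((a+b+c+3 : ℕ):ℤ)) ((a+b+c+3 : ℕ):ℤ)
              = Icc (-((a+b+c+3 : ℕ):ℤ))
                  (-((a+b+c+3 : ℕ):ℤ) + ((2*(a+b+c+3) : ℕ):ℤ)) by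
            congr 1; push_cast; ring]
          rw [telescope (H a b c) (-((a+b+c+3 : ℕ):ℤ)) (2*(a+b+c+3))]
          rw [show -((a+b+c+3 : ℕ):ℤ) + ((2*(a+b+c+3) : ℕ):ℤ) + 1
              = ((a+b+c+3 : ℕ):ℤ) + 1 by push_cast; ring]
          rw [hHtop, hHbot, sub_zero]
        simp only [Finset.sum_sub_distrib] at h0
        have hbig : ∑ k ∈ Icc (-((a+b+c+3 : ℕ):ℤ)) ((a+b+c+3 : ℕ):ℤ),
              T (a+1) (b+1) (c+1) k
            = ∑ k ∈ Icc (-((a+b+c+3 : ℕ):ℤ)) ((a+b+c+3 : ℕ):ℤ), T a (b+1) (c+1) k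
            + ∑ k ∈ Icc (-((a+b+c+3 : ℕ):ℤ)) ((a+b+c+3 : ℕ):ℤ), T (a+1) b (c+1) k
            + ∑ k ∈ Icc (-((a+b+c+3 : ℕ):ℤ)) ((a+b+c+3 : ℕ):ℤ), T (a+1) (b+1) c k := by
          linarith [h0]
        rw [← sum_T_eq (a+1) (b+1) (c+1) (a+b+c+3) (by omega), hbig,
          sum_T_eq a (b+1) (c+1) (a+b+c+3) (by omega),
          sum_T_eq (a+1) b (c+1) (a+b+c+3) (by omega),
          sum_T_eq (a+1) (b+1) c (a+b+c+3) (by omega),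
          ih (a+(b+1)+(c+1)) (by omega) a (b+1) (c+1) rfl,
          ih ((a+1)+b+(c+1)) (by omega) (a+1) b (c+1) rfl,
          ih ((a+1)+(b+1)+c) (by omega) (a+1) (b+1) c rfl]
        rw [show a+(b+1)+(c+1) = (a+b+c+2) by omega,
          show (a+1)+b+(c+1) = (a+b+c+2) by omega,
          show (a+1)+(b+1)+c = (a+b+c+2) by omega,
          show (a+1)+(b+1)+(c+1) = (a+b+c+2)+1 by omega]
        have hfa : (a.factorial : ℚ) ≠ 0 := by positivity
        have hfb : (b.factorial : ℚ) ≠ 0 := by positivity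
        have hfc : (c.factorial : ℚ) ≠ 0 := by positivity
        have hfn : ((a+b+c+2).factorial : ℚ) ≠ 0 := by positivity
        simp only [Nat.factorial_succ]
        push_cast
        field_simp
        ring

/-- **Dixon's theorem** in its classical binomial form: for natural numbers
`a, b, c`,
`∑_{k=-min{a,b,c}}^{min{a,b,c}} (-1)^k C(a+b, a+k) C(b+c, b+k) C(c+a, c+k)
  = (a+b+c)! / (a! b! c!)`. -/
theorem dixon_summation (a b c : ℕ) :
    ∑ k ∈ Finset.Icc (-(min a (min b c) : ℤ)) ((min a (min b c) : ℤ)),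
      (-1 : ℚ) ^ k *
        (((a + b).choose ((a : ℤ) + k).toNat : ℚ)) *
        (((b + c).choose ((b : ℤ) + k).toNat : ℚ)) *
        (((c + a).choose ((c : ℤ) + k).toNat : ℚ)) =
    ((a + b + c).factorial : ℚ) /
      ((a.factorial : ℚ) * (b.factorial : ℚ) * (c.factorial : ℚ)) := by
  have hcongr : ∀ k ∈ Finset.Icc (-(min a (min b c) : ℤ)) ((min a (min b c) : ℤ)),
      (-1 : ℚ) ^ k *
        (((a + b).choose ((a : ℤ) + k).toNat : ℚ)) *
        (((b + c).choose ((b : ℤ) + k).toNat : ℚ)) *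
        (((c + a).choose ((c : ℤ) + k).toNat : ℚ)) = T a b c k := by
    intro k hk
    simp only [mem_Icc] at hk
    have ha : (0:ℤ) ≤ (a:ℤ) + k := by omega
    have hb : (0:ℤ) ≤ (b:ℤ) + k := by omega
    have hc : (0:ℤ) ≤ (c:ℤ) + k := by omega
    simp only [T, ich, if_pos ha, if_pos hb, if_pos hc]
  rw [Finset.sum_congr rfl hcongr, dixon_aux (a + b + c) a b c rfl]
end

section
/- Let $x, y, z$ be natural numbers. For real $n \neq 0$, define $$S(n) \;=\; \sum_{k=0}^{\min\{x,y,z\}} \frac{n+2k}{n}\cdot\frac{(n)_k\,(-1)^k\,\frac{x!}{(x-k)!}\,\frac{y!}{(y-k)!}\,\frac{z!}{(z-k)!}}{k!\,(x+n+1)_k\,(y+n+1)_k\,(z+n+1)_k},$$ where $(q)_k = q(q+1)\cdots(q+k-1)$ with $(q)_0 = 1$. Then $S(n)$ tends to $\dfrac{x!\,y!\,z!\,(x+y+z)!}{(x+y)!\,(y+z)!\,(x+z)!}$ as $n \to 0$ within $\mathbb{R} \setminus \{0\}$. -/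
open Filter Topology Finset Nat


private lemma factne (n : ℕ) : ((n ! : ℝ)) ≠ 0 := by
  exact_mod_cast n.factorial_ne_zero

private lemma chooseR1 (n k : ℕ) :
    ((n+1).choose (k+1) : ℝ) = (n.choose k : ℝ) * (((n:ℕ):ℝ)+1) / (((k:ℕ):ℝ)+1) := by
  rw [eq_div_iff (by positivity), mul_comm ((n.choose k : ℝ)) _]
  exact_mod_cast (Nat.add_one_mul_choose_eq n k).symm

private lemma chooseR2 (n k m : ℕ) (h : n = k + m) :
    (n.choose (k+1) : ℝ) = (n.choose k : ℝ) * ((m:ℕ):ℝ) / (((k:ℕ):ℝ)+1) := by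
  subst h
  rw [eq_div_iff (by positivity)]
  have := Nat.choose_succ_right_eq (k+m) k
  rw [Nat.add_sub_cancel_left] at this
  exact_mod_cast this

private lemma mid (i w b c : ℕ) :
    ((i+w+2 : ℕ) : ℝ) * ((i+w+2+b).choose (i+1)) * ((i+w+2+b+c).choose (b+i+1)) *
        ((i+w+2+c).choose (c+i+1))
      - ((3*(i+w)+6+2*b+2*c : ℕ) : ℝ) * ((i+w+1+b).choose i) * ((i+w+2+b+c).choose (b+i+1)) *
        ((i+w+1+c).choose (c+i+1))
    = ((i+w+2+b+c : ℕ) : ℝ) *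
        (((i+w+1+b).choose (i+1)) * ((i+w+1+b+c).choose (b+i+1)) * ((i+w+1+c).choose (c+i+1))
          + ((i+w+1+b).choose i) * ((i+w+1+b+c).choose (b+i)) * ((i+w+1+c).choose (c+i))) := by
  have e1 : ((i+w+2+b).choose (i+1) : ℝ) = ((i+w+1+b).choose i : ℝ) * (((i+w+1+b : ℕ):ℝ)+1) / (((i:ℕ):ℝ)+1) := by
    rw [show i+w+2+b = (i+w+1+b)+1 by omega]; exact chooseR1 _ _
  have e2 : ((i+w+2+b+c).choose (b+i+1) : ℝ)
      = ((i+w+1+b+c).choose (b+i) : ℝ) * (((i+w+1+b+c : ℕ):ℝ)+1) / (((b+i:ℕ):ℝ)+1) := by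
    rw [show i+w+2+b+c = (i+w+1+b+c)+1 by omega]; exact chooseR1 _ _
  have e3 : ((i+w+2+c).choose (c+i+1) : ℝ)
      = ((i+w+1+c).choose (c+i) : ℝ) * (((i+w+1+c : ℕ):ℝ)+1) / (((c+i:ℕ):ℝ)+1) := by
    rw [show i+w+2+c = (i+w+1+c)+1 by omega]; exact chooseR1 _ _
  have e4 : ((i+w+1+b).choose (i+1) : ℝ) = ((i+w+1+b).choose i : ℝ) * ((w+1+b:ℕ):ℝ) / (((i:ℕ):ℝ)+1) :=
    chooseR2 _ _ _ (by omega)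
  have e5 : ((i+w+1+b+c).choose (b+i+1) : ℝ)
      = ((i+w+1+b+c).choose (b+i) : ℝ) * ((w+1+c:ℕ):ℝ) / (((b+i:ℕ):ℝ)+1) := chooseR2 _ _ _ (by omega)
  have e6 : ((i+w+1+c).choose (c+i+1) : ℝ)
      = ((i+w+1+c).choose (c+i) : ℝ) * ((w+1:ℕ):ℝ) / (((c+i:ℕ):ℝ)+1) := chooseR2 _ _ _ (by omega)
  rw [e1, e2, e3, e4, e5, e6]
  have hi : ((i:ℝ)+1) ≠ 0 := by positivity
  have hbi : ((b:ℝ)+(i:ℝ)+1) ≠ 0 := by positivity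
  have hci : ((c:ℝ)+(i:ℝ)+1) ≠ 0 := by positivity
  push_cast
  field_simp
  ring

noncomputable def dterm (x y z j : ℕ) : ℝ :=
  (-1)^(x+j) * ((x+y).choose j : ℝ) * ((y+z).choose (y-x+j) : ℝ) * ((z+x).choose (z-x+j) : ℝ)

noncomputable def gfun (x y z j : ℕ) : ℝ :=
  if j = 0 then 0 else
  -((y:ℝ)+(z:ℝ))/2 * (-1)^(x+1+j) * ((x+y).choose (j-1) : ℝ)
    * ((y+z-1).choose (y-(x+1)+(j-1)) : ℝ) * ((z+x).choose (z-(x+1)+(j-1)) : ℝ)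

private lemma case0 (x b c : ℕ) :
    ((2*x+2 : ℕ) : ℝ) * ((2*x+2+b+c).choose b) * ((2*x+2+c).choose c)
      = ((2*x+2+b+c : ℕ) : ℝ) * ((2*x+1+b+c).choose b) * ((2*x+1+c).choose c) := by
  rw [Nat.cast_choose ℝ (by omega : b ≤ 2*x+2+b+c),
      Nat.cast_choose ℝ (by omega : c ≤ 2*x+2+c),
      Nat.cast_choose ℝ (by omega : b ≤ 2*x+1+b+c),
      Nat.cast_choose ℝ (by omega : c ≤ 2*x+1+c),
      show 2*x+2+b+c - b = 2*x+2+c by omega, show 2*x+2+c - c = 2*x+2 by omega,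
      show 2*x+1+b+c - b = 2*x+1+c by omega, show 2*x+1+c - c = 2*x+1 by omega,
      show 2*x+2+b+c = (2*x+1+b+c)+1 by omega, show 2*x+2+c = (2*x+1+c)+1 by omega,
      show 2*x+2 = (2*x+1)+1 by omega]
  simp only [Nat.factorial_succ]
  have h1 := factne b; have h2 := factne c; have h3 := factne (2*x+1+b+c)
  have h4 := factne (2*x+1+c); have h5 := factne (2*x+1)
  push_cast
  field_simp

private lemma caseTop (x b c : ℕ) :
    ((2*x+2 : ℕ) : ℝ) * ((2*x+2+b).choose (2*x+2)) * ((2*x+2+b+c).choose (2*x+2+b))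
      = ((2*x+2+b+c : ℕ) : ℝ) * ((2*x+1+b).choose (2*x+1)) * ((2*x+1+b+c).choose (2*x+1+b)) := by
  rw [Nat.cast_choose ℝ (by omega : 2*x+2 ≤ 2*x+2+b),
      Nat.cast_choose ℝ (by omega : 2*x+2+b ≤ 2*x+2+b+c),
      Nat.cast_choose ℝ (by omega : 2*x+1 ≤ 2*x+1+b),
      Nat.cast_choose ℝ (by omega : 2*x+1+b ≤ 2*x+1+b+c),
      show 2*x+2+b - (2*x+2) = b by omega, show 2*x+2+b+c - (2*x+2+b) = c by omega,
      show 2*x+1+b - (2*x+1) = b by omega, show 2*x+1+b+c - (2*x+1+b) = c by omega,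
      show 2*x+2+b+c = (2*x+1+b+c)+1 by omega, show 2*x+2+b = (2*x+1+b)+1 by omega,
      show 2*x+2 = (2*x+1)+1 by omega]
  simp only [Nat.factorial_succ]
  have h1 := factne b; have h2 := factne c; have h3 := factne (2*x+1+b+c)
  have h4 := factne (2*x+1+b); have h5 := factne (2*x+1)
  push_cast
  field_simp

private lemma tele (x y z j : ℕ) (hy : x+1 ≤ y) (hz : x+1 ≤ z) (hj : j ≤ 2*(x+1)) :
    ((x:ℝ)+1) * dterm (x+1) y z j
        - ((x:ℝ)+1+(y:ℝ)+(z:ℝ)) * (if j = 0 then 0 else dterm x y z (j-1))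
      = gfun x y z (j+1) - gfun x y z j := by
  obtain ⟨b, rfl⟩ : ∃ b, y = x+1+b := ⟨y-(x+1), by omega⟩
  obtain ⟨c, rfl⟩ : ∃ c, z = x+1+c := ⟨z-(x+1), by omega⟩
  have hx2 : (x:ℝ) = ((2*x:ℕ):ℝ)/2 := by push_cast; ring
  rcases Nat.eq_zero_or_pos j with rfl | hj0
  · -- j = 0
    simp only [dterm, gfun, if_pos rfl, mul_zero, sub_zero, if_neg (Nat.succ_ne_zero 0),
      Nat.add_sub_cancel, zero_sub, Nat.zero_sub, sub_zero]
    rw [show (x+1)+(x+1+b) = 2*x+2+b by omega, show (x+1+b)+(x+1+c) = 2*x+2+b+c by omega,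
        show (x+1+c)+(x+1) = 2*x+2+c by omega, show (x+1+b)-(x+1)+0 = b by omega,
        show (x+1+c)-(x+1)+0 = c by omega, show x+(x+1+b) = 2*x+1+b by omega,
        show 2*x+2+b+c-1 = 2*x+1+b+c by omega, show (x+1+c)+x = 2*x+1+c by omega]
    have hs : ((-1:ℝ))^(x+1+(0+1)) = -(-1:ℝ)^(x+1+0) := by
      rw [show x+1+(0+1) = (x+1+0)+1 by omega, pow_succ]; ring
    rw [hs, Nat.choose_zero_right, Nat.choose_zero_right]
    have h0 := case0 x b c
    push_cast at h0 ⊢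
    linear_combination ((-1:ℝ)^(x+1+0)/2) * h0
  rcases Nat.lt_or_ge j (2*(x+1)) with hjlt | hjtop
  · -- middle: 1 ≤ j ≤ 2x+1
    obtain ⟨i, rfl⟩ : ∃ i, j = i+1 := ⟨j-1, by omega⟩
    obtain ⟨w, hw⟩ : ∃ w, i + w = 2*x := ⟨2*x-i, by omega⟩
    simp only [dterm, gfun, if_neg (Nat.succ_ne_zero _), Nat.add_sub_cancel]
    rw [show (x+1)+(x+1+b) = i+w+2+b by omega, show (x+1+b)+(x+1+c) = i+w+2+b+c by omega,
        show (x+1+c)+(x+1) = i+w+2+c by omega,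
        show (x+1+b)-(x+1)+(i+1) = b+i+1 by omega,
        show (x+1+c)-(x+1)+(i+1) = c+i+1 by omega,
        show x+(x+1+b) = i+w+1+b by omega,
        show (x+1+c)+x = i+w+1+c by omega,
        show (x+1+b)-x+i = b+i+1 by omega,
        show (x+1+c)-x+i = c+i+1 by omega,
        show i+w+2+b+c-1 = i+w+1+b+c by omega,
        show (x+1+b)-(x+1)+i = b+i by omega,
        show (x+1+c)-(x+1)+i = c+i by omega]
    have p2 : ((-1:ℝ))^(x+1+(i+1)) = (-1:ℝ)^(x+i) := by
      rw [show x+1+(i+1) = (x+i)+2 by omega, pow_add]; norm_num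
    have p3 : ((-1:ℝ))^(x+1+(i+1+1)) = -(-1:ℝ)^(x+i) := by
      rw [show x+1+(i+1+1) = (x+i)+3 by omega, pow_add, pow_succ, pow_two]; ring_nf
    rw [p2, p3]
    have hmid := mid i w b c
    rw [show 2*x = i+w from hw.symm] at hx2
    push_cast at hmid ⊢
    rw [hx2]
    push_cast
    linear_combination ((-1:ℝ)^(x+i)/2) * hmid
  · -- j = 2x+2
    have hj2 : j = 2*(x+1) := by omega
    subst hj2
    have hz1 : ((x+1+c)+x).choose ((x+1+c)-x+(2*(x+1)-1)) = 0 :=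
      Nat.choose_eq_zero_of_lt (by omega)
    have hz2 : ((x+1+c)+x).choose ((x+1+c)-(x+1)+(2*(x+1)+1-1)) = 0 :=
      Nat.choose_eq_zero_of_lt (by omega)
    simp only [dterm, gfun, if_neg (by omega : ¬ 2*(x+1) = 0),
      if_neg (by omega : ¬ 2*(x+1)+1 = 0), hz1, hz2, Nat.cast_zero, mul_zero, zero_sub]
    rw [show (x+1)+(x+1+b) = 2*x+2+b by omega, show (x+1+b)+(x+1+c) = 2*x+2+b+c by omega,
        show (x+1+c)+(x+1) = 2*x+2+c by omega,
        show 2*(x+1) = 2*x+2 by omega,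
        show (x+1+b)-(x+1)+(2*x+2) = 2*x+2+b by omega,
        show (x+1+c)-(x+1)+(2*x+2) = 2*x+2+c by omega,
        show x+(x+1+b) = 2*x+1+b by omega,
        show 2*x+2+b+c-1 = 2*x+1+b+c by omega,
        show 2*x+2-1 = 2*x+1 by omega,
        show (x+1+b)-(x+1)+(2*x+1) = 2*x+1+b by omega,
        show (x+1+c)+x = 2*x+1+c by omega,
        show (x+1+c)-(x+1)+(2*x+1) = 2*x+1+c by omega]
    rw [Nat.choose_self, Nat.choose_self]
    have ps : ((-1:ℝ))^(x+1+(2*x+2)) = (-1:ℝ)^(x+(2*x+2)) * (-1) := by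
      rw [show x+1+(2*x+2) = (x+(2*x+2))+1 by omega, pow_succ]
    rw [ps]
    have htop := caseTop x b c
    push_cast at htop ⊢
    linear_combination (-(-1:ℝ)^(x+(2*x+2))/2) * htop

private lemma dixon (y z : ℕ) : ∀ x : ℕ, x ≤ y → x ≤ z →
    ∑ j ∈ Finset.range (2*x+1), dterm x y z j
      = ((x+y+z)! : ℝ) / ((x ! : ℝ) * (y ! : ℝ) * (z ! : ℝ)) := by
  intro x
  induction x with
  | zero =>
    intro _ _
    simp only [Nat.mul_zero, Nat.zero_add, Finset.sum_range_one, dterm]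
    rw [show y-0+0 = y by omega, show z-0+0 = z by omega, show z+(0:ℕ) = z by omega]
    rw [Nat.cast_choose ℝ (by omega : y ≤ y+z), show y+z-y = z by omega]
    norm_num
  | succ x ih =>
    intro hy hz
    have hD : ((x:ℝ)+1) * (∑ j ∈ Finset.range (2*(x+1)+1), dterm (x+1) y z j)
        - ((x:ℝ)+1+(y:ℝ)+(z:ℝ)) * (∑ j ∈ Finset.range (2*x+1), dterm x y z j) = 0 := by
      have h1 : ∑ j ∈ Finset.range (2*(x+1)+1),
          (((x:ℝ)+1) * dterm (x+1) y z j
            - ((x:ℝ)+1+(y:ℝ)+(z:ℝ)) * (if j = 0 then 0 else dterm x y z (j-1)))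
          = gfun x y z (2*(x+1)+1) - gfun x y z 0 := by
        rw [Finset.sum_congr rfl (fun j hj => tele x y z j hy hz (by
          simp only [Finset.mem_range] at hj; omega))]
        exact Finset.sum_range_sub (gfun x y z) (2*(x+1)+1)
      have hg0 : gfun x y z 0 = 0 := by simp [gfun]
      have hgtop : gfun x y z (2*(x+1)+1) = 0 := by
        have hzc : (z+x).choose (z-(x+1)+(2*(x+1))) = 0 :=
          Nat.choose_eq_zero_of_lt (by omega)
        simp [gfun, hzc]
      rw [hg0, hgtop, sub_zero] at h1
      have h2 : ∑ j ∈ Finset.range (2*(x+1)+1),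
          (if j = 0 then (0:ℝ) else dterm x y z (j-1))
          = ∑ j ∈ Finset.range (2*x+1), dterm x y z j := by
        rw [Finset.sum_range_succ' (fun j => if j = 0 then (0:ℝ) else dterm x y z (j-1))
          (2*(x+1))]
        simp only [if_pos rfl, add_zero, if_neg (Nat.succ_ne_zero _), Nat.add_sub_cancel]
        rw [show 2*(x+1) = (2*x+1)+1 by omega, Finset.sum_range_succ]
        have : dterm x y z (2*x+1) = 0 := by
          have hzc : (z+x).choose (z-x+(2*x+1)) = 0 := Nat.choose_eq_zero_of_lt (by omega)
          simp [dterm, hzc]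
        rw [this, add_zero]
        simp
      rw [Finset.sum_sub_distrib, ← Finset.mul_sum, ← Finset.mul_sum, h2] at h1
      exact h1
    rw [ih (by omega) (by omega)] at hD
    have hx1 : ((x:ℝ)+1) ≠ 0 := by positivity
    apply mul_left_cancel₀ hx1
    rw [show ((x:ℝ)+1) * (((x+1+y+z)! : ℝ) / (((x+1)! : ℝ) * (y ! : ℝ) * (z ! : ℝ)))
        = ((x:ℝ)+1+(y:ℝ)+(z:ℝ)) * (((x+y+z)! : ℝ) / ((x ! : ℝ) * (y ! : ℝ) * (z ! : ℝ))) from ?_]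
    · linarith [hD]
    · rw [show x+1+y+z = (x+y+z)+1 by omega, Nat.factorial_succ, Nat.factorial_succ]
      have h1 := factne x; have h2 := factne y; have h3 := factne z
      push_cast
      field_simp
      ring

private lemma dterm_def (x y z j : ℕ) : dterm x y z j =
  (-1)^(x+j) * ((x+y).choose j : ℝ) * ((y+z).choose (y-x+j) : ℝ) * ((z+x).choose (z-x+j) : ℝ) :=
  rfl

noncomputable def ck (x y z k : ℕ) : ℝ :=
  if k = 0 then 1 else
  2 * (-1)^k * ((x ! : ℝ) * (x ! : ℝ) * (y ! : ℝ) * (y ! : ℝ) * (z ! : ℝ) * (z ! : ℝ)) /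
    (((x-k)! : ℝ) * ((x+k)! : ℝ) * ((y-k)! : ℝ) * ((y+k)! : ℝ) * ((z-k)! : ℝ) * ((z+k)! : ℝ))

private lemma key_s4 (x y z : ℕ) (hy : x ≤ y) (hz : x ≤ z) :
    ∑ k ∈ Finset.range (x+1), ck x y z k
      = ((x ! : ℝ) * (y ! : ℝ) * (z ! : ℝ) * ((x+y+z)! : ℝ))
        / (((x+y)! : ℝ) * ((y+z)! : ℝ) * ((x+z)! : ℝ)) := by
  set W : ℝ := ((x ! : ℝ) * (x ! : ℝ) * (y ! : ℝ) * (y ! : ℝ) * (z ! : ℝ) * (z ! : ℝ))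
    / (((x+y)! : ℝ) * ((y+z)! : ℝ) * ((z+x)! : ℝ)) with hW
  have h0 : ck x y z 0 = W * dterm x y z x := by
    rw [ck, if_pos rfl, dterm_def, show y-x+x = y by omega, show z-x+x = z by omega,
      show ((-1:ℝ))^(x+x) = 1 by rw [show x+x = 2*x by omega, pow_mul]; norm_num,
      Nat.cast_choose ℝ (by omega : x ≤ x+y), Nat.cast_choose ℝ (by omega : y ≤ y+z),
      Nat.cast_choose ℝ (by omega : z ≤ z+x), show x+y-x = y by omega,
      show y+z-y = z by omega, show z+x-z = x by omega, hW]
    have h1 := factne x; have h2 := factne y; have h3 := factne z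
    have h4 := factne (x+y); have h5 := factne (y+z); have h6 := factne (z+x)
    field_simp
  have h1 : ∀ k, k < x → ck x y z (k+1)
      = W * dterm x y z (x+(k+1)) + W * dterm x y z (x-(k+1)) := by
    intro k hk
    rw [ck, if_neg (Nat.succ_ne_zero k), dterm_def, dterm_def,
      show y-x+(x+(k+1)) = y+(k+1) by omega, show z-x+(x+(k+1)) = z+(k+1) by omega,
      show y-x+(x-(k+1)) = y-(k+1) by omega, show z-x+(x-(k+1)) = z-(k+1) by omega,
      show ((-1:ℝ))^(x+(x+(k+1))) = (-1)^(k+1) by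
        rw [show x+(x+(k+1)) = (k+1)+2*x by omega, pow_add, pow_mul]; norm_num,
      show ((-1:ℝ))^(x+(x-(k+1))) = (-1)^(k+1) by
        rw [show x+(x-(k+1)) = (k+1)+2*(x-(k+1)) by omega, pow_add, pow_mul]; norm_num,
      Nat.cast_choose ℝ (by omega : x+(k+1) ≤ x+y),
      Nat.cast_choose ℝ (by omega : y+(k+1) ≤ y+z),
      Nat.cast_choose ℝ (by omega : z+(k+1) ≤ z+x),
      Nat.cast_choose ℝ (by omega : x-(k+1) ≤ x+y),
      Nat.cast_choose ℝ (by omega : y-(k+1) ≤ y+z),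
      Nat.cast_choose ℝ (by omega : z-(k+1) ≤ z+x),
      show x+y-(x+(k+1)) = y-(k+1) by omega, show y+z-(y+(k+1)) = z-(k+1) by omega,
      show z+x-(z+(k+1)) = x-(k+1) by omega, show x+y-(x-(k+1)) = y+(k+1) by omega,
      show y+z-(y-(k+1)) = z+(k+1) by omega, show z+x-(z-(k+1)) = x+(k+1) by omega, hW]
    have e1 := factne (x-(k+1)); have e2 := factne (x+(k+1))
    have e3 := factne (y-(k+1)); have e4 := factne (y+(k+1))
    have e5 := factne (z-(k+1)); have e6 := factne (z+(k+1))
    have h4 := factne (x+y); have h5 := factne (y+z); have h6 := factne (z+x)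
    field_simp
    ring
  have hA : ∑ j ∈ Finset.range (2*x+1), dterm x y z j
      = (∑ j ∈ Finset.range x, dterm x y z j)
        + ∑ j ∈ Finset.Ico x (2*x+1), dterm x y z j := by
    rw [Finset.range_eq_Ico, ← Finset.sum_Ico_consecutive _ (Nat.zero_le x) (by omega : x ≤ 2*x+1),
      ← Finset.range_eq_Ico]
  have hB : ∑ j ∈ Finset.Ico x (2*x+1), dterm x y z j
      = ∑ k ∈ Finset.range (x+1), dterm x y z (x+k) := by
    rw [Finset.sum_Ico_eq_sum_range, show 2*x+1-x = x+1 by omega]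
  have hC : ∑ k ∈ Finset.range (x+1), dterm x y z (x+k)
      = (∑ k ∈ Finset.range x, dterm x y z (x+(k+1))) + dterm x y z x := by
    rw [Finset.sum_range_succ' (fun k => dterm x y z (x+k)) x, Nat.add_zero]
  have hD : ∑ j ∈ Finset.range x, dterm x y z j
      = ∑ k ∈ Finset.range x, dterm x y z (x-(k+1)) := by
    rw [← Finset.sum_range_reflect]
    exact Finset.sum_congr rfl fun k hk => by rw [show x-1-k = x-(k+1) by omega]
  have hsplit : ∑ j ∈ Finset.range (2*x+1), dterm x y z j
      = dterm x y z x + ((∑ k ∈ Finset.range x, dterm x y z (x+(k+1)))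
        + ∑ k ∈ Finset.range x, dterm x y z (x-(k+1))) := by
    rw [hA, hB, hC, hD]; ring
  have hsum : ∑ k ∈ Finset.range (x+1), ck x y z k
      = W * ∑ j ∈ Finset.range (2*x+1), dterm x y z j := by
    rw [Finset.sum_range_succ' (ck x y z) x, h0, hsplit,
      Finset.sum_congr rfl (fun k hk => h1 k (Finset.mem_range.mp hk)),
      Finset.sum_add_distrib, ← Finset.mul_sum, ← Finset.mul_sum]
    ring
  rw [hsum, dixon y z x hy hz, hW]
  have h1 := factne x; have h2 := factne y; have h3 := factne z
  have h4 := factne (x+y); have h5 := factne (y+z); have h6 := factne (z+x)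
  have h7 := factne (x+y+z); have h8 := factne (x+z)
  rw [show z+x = x+z by omega]
  field_simp

private lemma ck_swap12 (x y z k : ℕ) : ck x y z k = ck y x z k := by
  unfold ck; split_ifs with h
  · rfl
  · ring

private lemma ck_swap13 (x y z k : ℕ) : ck x y z k = ck z y x k := by
  unfold ck; split_ifs with h
  · rfl
  · ring

private lemma keyS (x y z : ℕ) :
    ∑ k ∈ Finset.range (min x (min y z) + 1), ck x y z k
      = ((x ! : ℝ) * (y ! : ℝ) * (z ! : ℝ) * ((x+y+z)! : ℝ))
        / (((x+y)! : ℝ) * ((y+z)! : ℝ) * ((x+z)! : ℝ)) := by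
  by_cases h1 : x ≤ y ∧ x ≤ z
  · rw [show min x (min y z) = x by omega]
    exact key_s4 x y z h1.1 h1.2
  by_cases h2 : y ≤ x ∧ y ≤ z
  · rw [show min x (min y z) = y by omega,
      Finset.sum_congr rfl (fun k _ => ck_swap12 x y z k), key_s4 y x z h2.1 h2.2,
      show y+x+z = x+y+z by omega, show y+x = x+y by omega, show x+z = x+z by omega]
    ring
  · have h3 : z ≤ y ∧ z ≤ x := by omega
    rw [show min x (min y z) = z by omega,
      Finset.sum_congr rfl (fun k _ => ck_swap13 x y z k), key_s4 z y x h3.1 h3.2,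
      show z+y+x = x+y+z by omega, show z+y = y+z by omega, show y+x = x+y by omega,
      show z+x = x+z by omega]
    ring

noncomputable def hfun (x y z k : ℕ) (n : ℝ) : ℝ :=
  (if k = 0 then 1 else (n + 2*(k:ℝ)) * (Polynomial.eval (n+1) (ascPochhammer ℝ (k-1)))) *
    ((-1)^k * ((x ! : ℝ) / ((x-k)! : ℝ)) * ((y ! : ℝ) / ((y-k)! : ℝ))
      * ((z ! : ℝ) / ((z-k)! : ℝ))) /
  ((k ! : ℝ) * Polynomial.eval ((x:ℝ)+n+1) (ascPochhammer ℝ k)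
    * Polynomial.eval ((y:ℝ)+n+1) (ascPochhammer ℝ k)
    * Polynomial.eval ((z:ℝ)+n+1) (ascPochhammer ℝ k))

private lemma hfun_zero (x y z k : ℕ) : hfun x y z k 0 = ck x y z k := by
  have hasc : ∀ a j : ℕ, Polynomial.eval ((a:ℝ)+1) (ascPochhammer ℝ j) = ((a+j)! : ℝ)/(a ! : ℝ) := by
    intro a j
    rw [eq_div_iff (factne a), mul_comm]
    exact factorial_mul_ascPochhammer ℝ a j
  rcases Nat.eq_zero_or_pos k with rfl | hk
  · simp [hfun, ck, div_self (factne x), div_self (factne y), div_self (factne z)]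
  obtain ⟨j, rfl⟩ : ∃ j, k = j+1 := ⟨k-1, by omega⟩
  rw [hfun, ck, if_neg (Nat.succ_ne_zero j), if_neg (Nat.succ_ne_zero j), Nat.add_sub_cancel,
    show (0:ℝ)+1 = 1 by ring, ascPochhammer_eval_one,
    show (x:ℝ)+0+1 = (x:ℝ)+1 by ring, show (y:ℝ)+0+1 = (y:ℝ)+1 by ring,
    show (z:ℝ)+0+1 = (z:ℝ)+1 by ring, hasc, hasc, hasc, Nat.factorial_succ (j)]
  have e1 := factne (x-(j+1)); have e2 := factne (x+(j+1))
  have e3 := factne (y-(j+1)); have e4 := factne (y+(j+1))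
  have e5 := factne (z-(j+1)); have e6 := factne (z+(j+1))
  have h1 := factne x; have h2 := factne y; have h3 := factne z
  have h7 := factne j
  have hj1 : ((j:ℝ)+1) ≠ 0 := by positivity
  push_cast
  field_simp
  ring

open Filter Topology

private lemma hfun_contAt (x y z k : ℕ) : ContinuousAt (hfun x y z k) 0 := by
  have hpos : ∀ a : ℕ, 0 < Polynomial.eval ((a:ℝ)+0+1) (ascPochhammer ℝ k) := by
    intro a
    exact ascPochhammer_pos k _ (by positivity)
  have hden : ((k ! : ℝ) * Polynomial.eval ((x:ℝ)+0+1) (ascPochhammer ℝ k)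
      * Polynomial.eval ((y:ℝ)+0+1) (ascPochhammer ℝ k)
      * Polynomial.eval ((z:ℝ)+0+1) (ascPochhammer ℝ k)) ≠ 0 := by
    have := hpos x; have := hpos y; have := hpos z
    have := factne k
    positivity
  apply ContinuousAt.div
  · apply ContinuousAt.mul
    · rcases Nat.eq_zero_or_pos k with rfl | hk
      · simp only [if_pos rfl]
        exact continuousAt_const
      · simp only [if_neg (by omega : ¬ k = 0)]
        apply ContinuousAt.mul
        · exact (continuousAt_id.add continuousAt_const)
        · exact ((ascPochhammer ℝ (k-1)).continuous.comp
            (continuous_id.add continuous_const)).continuousAt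
    · exact continuousAt_const
  · apply ContinuousAt.mul
    apply ContinuousAt.mul
    apply ContinuousAt.mul
    · exact continuousAt_const
    all_goals
      exact ((ascPochhammer ℝ k).continuous.comp
        ((continuous_const.add continuous_id).add continuous_const)).continuousAt
  · exact hden

/-- The Dougall–Ramanujan `₅F₄(1)` series, viewed as a function of a real
parameter `n`, tends, as `n → 0` within `ℝ \ {0}`, to the value obtained by
formally setting `n = 0` in the right-hand side of the Dougall–Ramanujan
identity, namely `x! y! z! (x+y+z)! / ((x+y)! (y+z)! (x+z)!)`. -/
theorem dougall_ramanujan_limit_at_zero (x y z : ℕ)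
    (S : ℝ → ℝ)
    (hS : ∀ n : ℝ, n ≠ 0 → S n =
      ∑ k ∈ Finset.range (min x (min y z) + 1),
        (n + 2 * k) / n *
          ((ascPochhammer ℝ k).eval n * (-1 : ℝ) ^ k *
            ((x.factorial : ℝ) / ((x - k).factorial : ℝ)) *
            ((y.factorial : ℝ) / ((y - k).factorial : ℝ)) *
            ((z.factorial : ℝ) / ((z - k).factorial : ℝ))) /
          ((k.factorial : ℝ) *
            (ascPochhammer ℝ k).eval ((x : ℝ) + n + 1) *
            (ascPochhammer ℝ k).eval ((y : ℝ) + n + 1) *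
            (ascPochhammer ℝ k).eval ((z : ℝ) + n + 1))) :
    Tendsto S (𝓝[≠] (0 : ℝ))
      (𝓝 (((x.factorial : ℝ) * (y.factorial : ℝ) * (z.factorial : ℝ) *
            ((x + y + z).factorial : ℝ)) /
          (((x + y).factorial : ℝ) * ((y + z).factorial : ℝ) *
            ((x + z).factorial : ℝ)))) := by
  set G : ℝ → ℝ := fun n => ∑ k ∈ Finset.range (min x (min y z) + 1), hfun x y z k n with hG
  have hcont : ContinuousAt G 0 := by
    show Filter.Tendsto (fun n => ∑ k ∈ Finset.range (min x (min y z) + 1), hfun x y z k n)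
      (𝓝 0) (𝓝 (∑ k ∈ Finset.range (min x (min y z) + 1), hfun x y z k 0))
    apply tendsto_finset_sum
    intro k _
    exact hfun_contAt x y z k
  have hG0 : G 0 = (((x.factorial : ℝ) * (y.factorial : ℝ) * (z.factorial : ℝ) *
      ((x + y + z).factorial : ℝ)) /
      (((x + y).factorial : ℝ) * ((y + z).factorial : ℝ) * ((x + z).factorial : ℝ))) := by
    rw [hG]
    simp only
    rw [Finset.sum_congr rfl (fun k _ => hfun_zero x y z k)]
    exact keyS x y z
  have hTG : Tendsto G (𝓝[≠] (0:ℝ)) (𝓝 (G 0)) := hcont.tendsto.mono_left nhdsWithin_le_nhds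
  rw [hG0] at hTG
  apply hTG.congr'
  filter_upwards [self_mem_nhdsWithin] with n hn
  have hn0 : n ≠ 0 := hn
  rw [hS n hn0, hG]
  refine Finset.sum_congr rfl (fun k _ => ?_)
  rcases Nat.eq_zero_or_pos k with rfl | hk
  · rw [hfun]
    simp only [if_pos rfl]
    congr 1
    simp only [ascPochhammer_zero, Polynomial.eval_one, Nat.cast_zero, mul_zero, add_zero,
      pow_zero, one_mul, Nat.sub_zero]
    rw [div_self hn0]
    simp
  · obtain ⟨j, rfl⟩ : ∃ j, k = j+1 := ⟨k-1, by omega⟩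
    rw [hfun, if_neg (Nat.succ_ne_zero j), Nat.add_sub_cancel]
    have he : Polynomial.eval n (ascPochhammer ℝ (j+1))
        = n * Polynomial.eval (n+1) (ascPochhammer ℝ j) := by
      rw [ascPochhammer_succ_left]
      simp [Polynomial.eval_comp]
    rw [he]
    congr 1
    push_cast
    field_simp
end
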